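/- Let V be a real inner product space of finite dimension 2n+1 with n ≥ 1. Let ξ ∈ V be a unit vector, let η be the linear functional η(Y) = ⟨Y, ξ⟩, and let φ be a skew-adjoint endomorphism of V satisfying φ(φ(Y)) = -Y + η(Y)ξ for all Y ∈ V and φ(ξ) = 0. If Q is a self-adjoint endomorphism of V satisfying Q(ξ) = 2n·ξ and Q∘φ + φ∘Q = 4n·φ, then the trace of Q equals 2n(2n+1). (This is the pointwise computation of the scalar curvature r = 2n(2n+1) carried out in the proof of Theorem 3.2 using an orthonormal φ-basis.) -/

import Mathlib

open RealInnerProductSpace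

/-- The pointwise scalar-curvature computation in the proof of Theorem 3.2:
on a `(2n+1)`-dimensional inner product space with an almost-contact structure
`(φ, ξ, η)`, a self-adjoint operator `Q` with `Qξ = 2n ξ` and
`Qφ + φQ = 4n φ` has trace `2n(2n+1)`. -/
theorem k_contact_trace_eq {V : Type*} [NormedAddCommGroup V] [InnerProductSpace ℝ V]
    [FiniteDimensional ℝ V] (n : ℕ) (hn : 1 ≤ n)
    (hdim : Module.finrank ℝ V = 2 * n + 1)
    (ξ : V) (hξ : ‖ξ‖ = 1)
    (φ Q : V →ₗ[ℝ] V)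
    (hφskew : ∀ Y Z : V, ⟪φ Y, Z⟫ = -⟪Y, φ Z⟫)
    (hφ2 : ∀ Y : V, φ (φ Y) = -Y + ⟪Y, ξ⟫ • ξ)
    (hφξ : φ ξ = 0)
    (hQsym : ∀ Y Z : V, ⟪Q Y, Z⟫ = ⟪Y, Q Z⟫)
    (hQξ : Q ξ = ((2 * n : ℕ) : ℝ) • ξ)
    (hQφ : ∀ Y : V, Q (φ Y) + φ (Q Y) = ((4 * n : ℕ) : ℝ) • φ Y) :
    LinearMap.trace ℝ V Q = 2 * n * (2 * n + 1) := by
  have hξξ : ⟪ξ, ξ⟫ = (1 : ℝ) := by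
    rw [real_inner_self_eq_norm_sq, hξ]; norm_num
  -- rank-one projector P : Y ↦ ⟪Y, ξ⟫ • ξ
  set η : Module.Dual ℝ V := innerₗ V ξ with hη
  set P : V →ₗ[ℝ] V := dualTensorHom ℝ V V (η ⊗ₜ ξ) with hP
  have hPapp : ∀ Y : V, P Y = ⟪Y, ξ⟫ • ξ := by
    intro Y
    simp [hP, hη, dualTensorHom_apply, real_inner_comm]
  have hPtr : LinearMap.trace ℝ V P = 1 := by
    rw [hP, LinearMap.trace_eq_contract_apply]
    simp [hη, hξξ, hξ]
  -- φ ∘ φ = -1 + P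
  have hφφ : φ * φ = -1 + P := by
    ext Y
    simp [Module.End.mul_apply, hφ2, hPapp]
  -- Q * (φ * φ) + φ * Q * φ = 4n • (φ * φ)
  have hrel : Q * (φ * φ) + (φ * Q) * φ = ((4 * n : ℕ) : ℝ) • (φ * φ) := by
    ext Y
    simpa [Module.End.mul_apply] using hQφ (φ Y)
  have htr := congrArg (LinearMap.trace ℝ V) hrel
  rw [map_add, map_smul, LinearMap.trace_mul_comm ℝ (φ * Q) φ] at htr
  have : φ * (φ * Q) = (φ * φ) * Q := (mul_assoc _ _ _).symm
  rw [this, LinearMap.trace_mul_comm ℝ (φ * φ) Q] at htr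
  -- compute trace Q * (φ*φ)
  have hQP : Q * P = ((2 * n : ℕ) : ℝ) • P := by
    ext Y
    simp [Module.End.mul_apply, hPapp, hQξ, smul_smul, mul_comm]
  have h1 : LinearMap.trace ℝ V (Q * (φ * φ)) =
      -LinearMap.trace ℝ V Q + (2 * n : ℝ) := by
    rw [hφφ, mul_add, map_add, hQP, map_smul, hPtr]
    simp [mul_neg_one]
  have h2 : LinearMap.trace ℝ V (φ * φ) = -(2 * n : ℝ) := by
    rw [hφφ, map_add, hPtr, map_neg, LinearMap.trace_one, hdim]
    push_cast; ring
  rw [h1, h2] at htr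
  rw [smul_eq_mul] at htr
  push_cast at htr
  linarith
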